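/- arXiv:2202.13445 — 2 statements merged into one kernel-verified Lean document; each statement's English description precedes it below -/
import Mathlib

section
/- For real numbers e₁, …, eₙ with Dₙ(t) = Sₙ(t) + t·Cₙ(t) as above, and λ > 0, the statistic T_{n,λ} = n·∫_ℝ Dₙ(t)²·e^{−λ|t|} dt admits the closed form T_{n,λ} = (λ/n)·Σ_{j,k=1}^n [ 1/(λ² + (e⁻ⱼₖ)²) − 1/(λ² + (e⁺ⱼₖ)²) + 4e⁺ⱼₖ/(λ² + (e⁺ⱼₖ)²)² + 2(λ² − 3(e⁺ⱼₖ)²)/(λ² + (e⁺ⱼₖ)²)³ + 2(λ² − 3(e⁻ⱼₖ)²)/(λ² + (e⁻ⱼₖ)²)³ ], where e⁺ⱼₖ = eₖ + eⱼ and e⁻ⱼₖ = eₖ − eⱼ. -/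
open MeasureTheory Real Set Filter Topology

section Aux

lemma tend_pow_exp (l : ℝ) (hl : 0 < l) (k : ℕ) :
    Tendsto (fun t : ℝ => t ^ k * Real.exp (-(l * t))) atTop (𝓝 0) := by
  have h1 : Tendsto (fun t : ℝ => l * t) atTop atTop :=
    tendsto_id.const_mul_atTop hl
  have h3 := ((tendsto_pow_mul_exp_neg_atTop_nhds_zero k).comp h1).const_mul (1 / l ^ k)
  rw [mul_zero] at h3
  refine h3.congr (fun t => ?_)
  simp only [Function.comp]
  field_simp
  ring

lemma tend_term (l : ℝ) (hl : 0 < l) (k : ℕ) (c : ℝ) (g : ℝ → ℝ) (hg : ∀ t, |g t| ≤ 1) :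
    Tendsto (fun t : ℝ => Real.exp (-(l * t)) * (c * t ^ k * g t)) atTop (𝓝 0) := by
  have hb : Tendsto (fun t : ℝ => |c| * (t ^ k * Real.exp (-(l * t)))) atTop (𝓝 0) := by
    simpa using (tend_pow_exp l hl k).const_mul |c|
  apply squeeze_zero_norm' _ hb
  filter_upwards [eventually_ge_atTop (0 : ℝ)] with t ht
  have h1 : |Real.exp (-(l * t)) * (c * t ^ k * g t)| =
      Real.exp (-(l * t)) * (|c| * |t| ^ k * |g t|) := by
    rw [abs_mul, abs_mul, abs_mul, abs_pow, abs_of_nonneg (Real.exp_pos _).le]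
  rw [Real.norm_eq_abs, h1, abs_of_nonneg ht]
  have h2 : Real.exp (-(l * t)) * (|c| * t ^ k * |g t|) ≤
      Real.exp (-(l * t)) * (|c| * t ^ k * 1) := by
    gcongr
    exact hg t
  calc Real.exp (-(l*t)) * (|c| * t ^ k * |g t|) ≤ Real.exp (-(l*t)) * (|c| * t ^ k * 1) := h2
    _ = |c| * (t ^ k * Real.exp (-(l*t))) := by ring

lemma intOn_aux (l : ℝ) (hl : 0 < l) (k : ℕ) (g : ℝ → ℝ) (hgc : Continuous g)
    (hg : ∀ t, |g t| ≤ 1) :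
    IntegrableOn (fun t : ℝ => t ^ k * g t * Real.exp (-(l * t))) (Ioi (0:ℝ)) := by
  apply integrable_of_isBigO_exp_neg (half_pos hl)
    (Continuous.continuousOn (by fun_prop))
  rw [Asymptotics.isBigO_iff]
  refine ⟨1, ?_⟩
  have h0 := (tend_pow_exp (l/2) (half_pos hl) k).eventually (eventually_le_nhds one_pos)
  filter_upwards [eventually_ge_atTop (0:ℝ), h0] with t ht hle
  rw [Real.norm_eq_abs, Real.norm_eq_abs, abs_mul, abs_mul, abs_pow, abs_of_nonneg ht,
    abs_of_nonneg (Real.exp_pos _).le, abs_of_nonneg (Real.exp_pos _).le]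
  have hsplit : Real.exp (-(l * t)) = Real.exp (-(l/2 * t)) * Real.exp (-(l/2) * t) := by
    rw [← Real.exp_add]; ring_nf
  calc t ^ k * |g t| * Real.exp (-(l * t)) ≤ t ^ k * 1 * Real.exp (-(l * t)) := by
        gcongr
        exact hg t
    _ = (t ^ k * Real.exp (-(l/2 * t))) * Real.exp (-(l/2) * t) := by rw [hsplit]; ring
    _ ≤ 1 * Real.exp (-(l/2) * t) := by
        have h2 : (0:ℝ) ≤ Real.exp (-(l/2) * t) := (Real.exp_pos _).le
        nlinarith

lemma even_integrable (f : ℝ → ℝ) (hev : ∀ t, f (-t) = f t)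
    (h : IntegrableOn f (Ioi (0:ℝ))) : Integrable f := by
  have hIci : IntegrableOn f (Ici (0:ℝ)) := (integrableOn_Ici_iff_integrableOn_Ioi).2 h
  have hIic : IntegrableOn f (Iic (0:ℝ)) := by
    have h2 : IntegrableOn (f ∘ (fun x : ℝ => -x)) ((fun x : ℝ => -x) ⁻¹' (Ici 0)) :=
      ((Measure.measurePreserving_neg (volume : Measure ℝ)).integrableOn_comp_preimage
        (Homeomorph.neg ℝ).measurableEmbedding).2 hIci
    have h3 : (fun x : ℝ => -x) ⁻¹' (Ici 0) = Iic 0 := by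
      ext x; simp
    rw [h3] at h2
    refine h2.congr_fun (fun x _ => ?_) measurableSet_Iic
    simp [Function.comp, hev]
  rw [← integrableOn_univ, ← Iic_union_Ioi (a := (0:ℝ)), integrableOn_union]
  exact ⟨hIic, h⟩

lemma even_integral (f : ℝ → ℝ) (hev : ∀ t, f (-t) = f t)
    (h : IntegrableOn f (Ioi (0:ℝ))) :
    ∫ t : ℝ, f t = 2 * ∫ t in Ioi (0:ℝ), f t := by
  have hInt := even_integrable f hev h
  rw [← intervalIntegral.integral_Iic_add_Ioi (hInt.integrableOn) (hInt.integrableOn) (b := (0:ℝ))]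
  have heq : ∫ x in Iic (0:ℝ), f x = ∫ x in Ioi (0:ℝ), f x := by
    have h1 := integral_comp_neg_Iic (0:ℝ) f
    rw [neg_zero] at h1
    rw [← h1]
    exact setIntegral_congr_fun measurableSet_Iic (fun x _ => (hev x).symm)
  rw [heq]; ring

lemma J0 (l z : ℝ) (hl : 0 < l) :
    ∫ t in Ioi (0:ℝ), Real.cos (t * z) * Real.exp (-(l * t)) = l / (l ^ 2 + z ^ 2) := by
  have hD : (0:ℝ) < l ^ 2 + z ^ 2 := by positivity
  set F : ℝ → ℝ := fun t => Real.exp (-(l * t)) *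
    ((-l) * Real.cos (t * z) + z * Real.sin (t * z)) / (l ^ 2 + z ^ 2) with hF
  have hderiv : ∀ x : ℝ, HasDerivAt F (Real.cos (x * z) * Real.exp (-(l * x))) x := by
    intro x
    have he : HasDerivAt (fun t : ℝ => Real.exp (-(l * t))) (Real.exp (-(l * x)) * -(l * 1)) x :=
      (((hasDerivAt_id x).const_mul l).neg).exp
    have hc : HasDerivAt (fun t : ℝ => Real.cos (t * z)) (-Real.sin (x * z) * (1 * z)) x :=
      by have := (Real.hasDerivAt_cos (x * z)).comp x ((hasDerivAt_id x).mul_const z); exact this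
    have hs : HasDerivAt (fun t : ℝ => Real.sin (t * z)) (Real.cos (x * z) * (1 * z)) x :=
      by have := (Real.hasDerivAt_sin (x * z)).comp x ((hasDerivAt_id x).mul_const z); exact this
    have h := ((he.mul ((hc.const_mul (-l)).add (hs.const_mul z))).div_const (l ^ 2 + z ^ 2))
    refine h.congr_deriv ?_
    simp only [Pi.mul_apply, Pi.add_apply]
    field_simp
    ring
  have htend : Tendsto F atTop (𝓝 0) := by
    have h1 := tend_term l hl 0 (-l / (l ^ 2 + z ^ 2)) (fun t => Real.cos (t * z))
      (fun t => Real.abs_cos_le_one _)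
    have h2 := tend_term l hl 0 (z / (l ^ 2 + z ^ 2)) (fun t => Real.sin (t * z))
      (fun t => Real.abs_sin_le_one _)
    have h3 := h1.add h2
    rw [add_zero] at h3
    refine h3.congr (fun t => ?_)
    rw [hF]
    ring
  have hint : IntegrableOn (fun t : ℝ => Real.cos (t * z) * Real.exp (-(l * t))) (Ioi (0:ℝ)) := by
    have := intOn_aux l hl 0 (fun t => Real.cos (t * z))
      (Real.continuous_cos.comp (continuous_id.mul continuous_const))
      (fun t => Real.abs_cos_le_one _)
    refine this.congr_fun (fun t _ => ?_) measurableSet_Ioi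
    ring
  have := integral_Ioi_of_hasDerivAt_of_tendsto' (f := F)
    (fun x _ => hderiv x) hint htend
  rw [this, hF]
  simp
  field_simp

lemma J1 (l z : ℝ) (hl : 0 < l) :
    ∫ t in Ioi (0:ℝ), t * Real.sin (t * z) * Real.exp (-(l * t)) =
      2 * l * z / (l ^ 2 + z ^ 2) ^ 2 := by
  have hD : (0:ℝ) < l ^ 2 + z ^ 2 := by positivity
  set D := l ^ 2 + z ^ 2 with hDdef
  set F : ℝ → ℝ := fun t => Real.exp (-(l * t)) *
    (((-z / D) * t + (-2 * l * z / D ^ 2)) * Real.cos (t * z) +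
     ((-l / D) * t + ((z ^ 2 - l ^ 2) / D ^ 2)) * Real.sin (t * z)) with hF
  have hderiv : ∀ x : ℝ, HasDerivAt F (x * Real.sin (x * z) * Real.exp (-(l * x))) x := by
    intro x
    have he : HasDerivAt (fun t : ℝ => Real.exp (-(l * t))) (Real.exp (-(l * x)) * -(l * 1)) x :=
      (((hasDerivAt_id x).const_mul l).neg).exp
    have hc : HasDerivAt (fun t : ℝ => Real.cos (t * z)) (-Real.sin (x * z) * (1 * z)) x :=
      by have := (Real.hasDerivAt_cos (x * z)).comp x ((hasDerivAt_id x).mul_const z); exact this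
    have hs : HasDerivAt (fun t : ℝ => Real.sin (t * z)) (Real.cos (x * z) * (1 * z)) x :=
      by have := (Real.hasDerivAt_sin (x * z)).comp x ((hasDerivAt_id x).mul_const z); exact this
    have hP : HasDerivAt (fun t : ℝ => (-z / D) * t + (-2 * l * z / D ^ 2)) (-z / D) x := by
      simpa using (((hasDerivAt_id x).const_mul (-z / D)).add_const (-2 * l * z / D ^ 2))
    have hQ : HasDerivAt (fun t : ℝ => (-l / D) * t + ((z ^ 2 - l ^ 2) / D ^ 2)) (-l / D) x := by
      simpa using (((hasDerivAt_id x).const_mul (-l / D)).add_const ((z ^ 2 - l ^ 2) / D ^ 2))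
    have h := he.mul ((hP.mul hc).add (hQ.mul hs))
    refine h.congr_deriv ?_
    simp only [Pi.mul_apply, Pi.add_apply]
    rw [hDdef]
    field_simp
    ring
  have htend : Tendsto F atTop (𝓝 0) := by
    have h1 := tend_term l hl 1 (-z / D) (fun t => Real.cos (t * z))
      (fun t => Real.abs_cos_le_one _)
    have h2 := tend_term l hl 0 (-2 * l * z / D ^ 2) (fun t => Real.cos (t * z))
      (fun t => Real.abs_cos_le_one _)
    have h3 := tend_term l hl 1 (-l / D) (fun t => Real.sin (t * z))
      (fun t => Real.abs_sin_le_one _)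
    have h4 := tend_term l hl 0 ((z ^ 2 - l ^ 2) / D ^ 2) (fun t => Real.sin (t * z))
      (fun t => Real.abs_sin_le_one _)
    have h := ((h1.add h2).add h3).add h4
    simp only [add_zero] at h
    refine h.congr (fun t => ?_)
    rw [hF]
    ring
  have hint : IntegrableOn (fun t : ℝ => t * Real.sin (t * z) * Real.exp (-(l * t)))
      (Ioi (0:ℝ)) := by
    have := intOn_aux l hl 1 (fun t => Real.sin (t * z))
      (Real.continuous_sin.comp (continuous_id.mul continuous_const))
      (fun t => Real.abs_sin_le_one _)
    refine this.congr_fun (fun t _ => ?_) measurableSet_Ioi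
    ring
  have := integral_Ioi_of_hasDerivAt_of_tendsto' (f := F) (fun x _ => hderiv x) hint htend
  rw [this, hF]
  simp
  field_simp

lemma J2 (l z : ℝ) (hl : 0 < l) :
    ∫ t in Ioi (0:ℝ), t ^ 2 * Real.cos (t * z) * Real.exp (-(l * t)) =
      2 * l * (l ^ 2 - 3 * z ^ 2) / (l ^ 2 + z ^ 2) ^ 3 := by
  have hD : (0:ℝ) < l ^ 2 + z ^ 2 := by positivity
  set D := l ^ 2 + z ^ 2 with hDdef
  set F : ℝ → ℝ := fun t => Real.exp (-(l * t)) *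
    (((-l / D) * t ^ 2 + ((2 * z ^ 2 - 2 * l ^ 2) / D ^ 2) * t +
        (-2 * l * (l ^ 2 - 3 * z ^ 2) / D ^ 3)) * Real.cos (t * z) +
     ((z / D) * t ^ 2 + (4 * l * z / D ^ 2) * t +
        ((6 * l ^ 2 * z - 2 * z ^ 3) / D ^ 3)) * Real.sin (t * z)) with hF
  have hderiv : ∀ x : ℝ, HasDerivAt F (x ^ 2 * Real.cos (x * z) * Real.exp (-(l * x))) x := by
    intro x
    have he : HasDerivAt (fun t : ℝ => Real.exp (-(l * t))) (Real.exp (-(l * x)) * -(l * 1)) x :=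
      (((hasDerivAt_id x).const_mul l).neg).exp
    have hc : HasDerivAt (fun t : ℝ => Real.cos (t * z)) (-Real.sin (x * z) * (1 * z)) x :=
      by have := (Real.hasDerivAt_cos (x * z)).comp x ((hasDerivAt_id x).mul_const z); exact this
    have hs : HasDerivAt (fun t : ℝ => Real.sin (t * z)) (Real.cos (x * z) * (1 * z)) x :=
      by have := (Real.hasDerivAt_sin (x * z)).comp x ((hasDerivAt_id x).mul_const z); exact this
    have hsq : HasDerivAt (fun t : ℝ => t ^ 2) (2 * x) x := by
      simpa using hasDerivAt_pow 2 x
    have hP : HasDerivAt (fun t : ℝ => (-l / D) * t ^ 2 + ((2 * z ^ 2 - 2 * l ^ 2) / D ^ 2) * t +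
        (-2 * l * (l ^ 2 - 3 * z ^ 2) / D ^ 3))
        ((-l / D) * (2 * x) + (2 * z ^ 2 - 2 * l ^ 2) / D ^ 2) x := by
      have := ((hsq.const_mul (-l / D)).add
        ((hasDerivAt_id x).const_mul ((2 * z ^ 2 - 2 * l ^ 2) / D ^ 2))).add_const
        (-2 * l * (l ^ 2 - 3 * z ^ 2) / D ^ 3)
      refine this.congr_deriv ?_
      ring
    have hQ : HasDerivAt (fun t : ℝ => (z / D) * t ^ 2 + (4 * l * z / D ^ 2) * t +
        ((6 * l ^ 2 * z - 2 * z ^ 3) / D ^ 3))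
        ((z / D) * (2 * x) + 4 * l * z / D ^ 2) x := by
      have := ((hsq.const_mul (z / D)).add
        ((hasDerivAt_id x).const_mul (4 * l * z / D ^ 2))).add_const
        ((6 * l ^ 2 * z - 2 * z ^ 3) / D ^ 3)
      refine this.congr_deriv ?_
      ring
    have h := he.mul ((hP.mul hc).add (hQ.mul hs))
    refine h.congr_deriv ?_
    simp only [Pi.mul_apply, Pi.add_apply]
    rw [hDdef]
    field_simp
    ring
  have htend : Tendsto F atTop (𝓝 0) := by
    have h1 := tend_term l hl 2 (-l / D) (fun t => Real.cos (t * z))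
      (fun t => Real.abs_cos_le_one _)
    have h2 := tend_term l hl 1 ((2 * z ^ 2 - 2 * l ^ 2) / D ^ 2) (fun t => Real.cos (t * z))
      (fun t => Real.abs_cos_le_one _)
    have h3 := tend_term l hl 0 (-2 * l * (l ^ 2 - 3 * z ^ 2) / D ^ 3) (fun t => Real.cos (t * z))
      (fun t => Real.abs_cos_le_one _)
    have h4 := tend_term l hl 2 (z / D) (fun t => Real.sin (t * z))
      (fun t => Real.abs_sin_le_one _)
    have h5 := tend_term l hl 1 (4 * l * z / D ^ 2) (fun t => Real.sin (t * z))
      (fun t => Real.abs_sin_le_one _)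
    have h6 := tend_term l hl 0 ((6 * l ^ 2 * z - 2 * z ^ 3) / D ^ 3) (fun t => Real.sin (t * z))
      (fun t => Real.abs_sin_le_one _)
    have h := ((((h1.add h2).add h3).add h4).add h5).add h6
    simp only [add_zero] at h
    refine h.congr (fun t => ?_)
    rw [hF]
    ring
  have hint : IntegrableOn (fun t : ℝ => t ^ 2 * Real.cos (t * z) * Real.exp (-(l * t)))
      (Ioi (0:ℝ)) :=
    intOn_aux l hl 2 (fun t => Real.cos (t * z))
      (Real.continuous_cos.comp (continuous_id.mul continuous_const))
      (fun t => Real.abs_cos_le_one _)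
  have := integral_Ioi_of_hasDerivAt_of_tendsto' (f := F) (fun x _ => hderiv x) hint htend
  rw [this, hF]
  simp
  field_simp

-- full-line versions
lemma K0_intOn (l z : ℝ) (hl : 0 < l) :
    IntegrableOn (fun t : ℝ => Real.cos (t * z) * Real.exp (-(l * |t|))) (Ioi (0:ℝ)) := by
  have := intOn_aux l hl 0 (fun t => Real.cos (t * z))
    (Real.continuous_cos.comp (continuous_id.mul continuous_const))
    (fun t => Real.abs_cos_le_one _)
  refine this.congr_fun (fun t ht => ?_) measurableSet_Ioi
  rw [abs_of_pos ht]
  ring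

lemma K0_even (l z : ℝ) : ∀ t : ℝ,
    Real.cos ((-t) * z) * Real.exp (-(l * |(-t)|)) = Real.cos (t * z) * Real.exp (-(l * |t|)) := by
  intro t
  rw [abs_neg, neg_mul, Real.cos_neg]

lemma K0_int (l z : ℝ) (hl : 0 < l) :
    Integrable (fun t : ℝ => Real.cos (t * z) * Real.exp (-(l * |t|))) :=
  even_integrable _ (K0_even l z) (K0_intOn l z hl)

lemma K0 (l z : ℝ) (hl : 0 < l) :
    ∫ t : ℝ, Real.cos (t * z) * Real.exp (-(l * |t|)) = 2 * l / (l ^ 2 + z ^ 2) := by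
  rw [even_integral _ (K0_even l z) (K0_intOn l z hl)]
  have heq : ∫ t in Ioi (0:ℝ), Real.cos (t * z) * Real.exp (-(l * |t|)) =
      ∫ t in Ioi (0:ℝ), Real.cos (t * z) * Real.exp (-(l * t)) := by
    refine setIntegral_congr_fun measurableSet_Ioi (fun t ht => ?_)
    rw [abs_of_pos ht]
  rw [heq, J0 l z hl]
  ring

lemma K1_intOn (l z : ℝ) (hl : 0 < l) :
    IntegrableOn (fun t : ℝ => t * Real.sin (t * z) * Real.exp (-(l * |t|))) (Ioi (0:ℝ)) := by
  have := intOn_aux l hl 1 (fun t => Real.sin (t * z))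
    (Real.continuous_sin.comp (continuous_id.mul continuous_const))
    (fun t => Real.abs_sin_le_one _)
  refine this.congr_fun (fun t ht => ?_) measurableSet_Ioi
  rw [abs_of_pos ht]
  ring

lemma K1_even (l z : ℝ) : ∀ t : ℝ,
    (-t) * Real.sin ((-t) * z) * Real.exp (-(l * |(-t)|)) =
      t * Real.sin (t * z) * Real.exp (-(l * |t|)) := by
  intro t
  rw [abs_neg, show (-t) * z = -(t * z) from neg_mul _ _, Real.sin_neg]
  ring

lemma K1_int (l z : ℝ) (hl : 0 < l) :
    Integrable (fun t : ℝ => t * Real.sin (t * z) * Real.exp (-(l * |t|))) :=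
  even_integrable _ (K1_even l z) (K1_intOn l z hl)

lemma K1 (l z : ℝ) (hl : 0 < l) :
    ∫ t : ℝ, t * Real.sin (t * z) * Real.exp (-(l * |t|)) =
      4 * l * z / (l ^ 2 + z ^ 2) ^ 2 := by
  rw [even_integral _ (K1_even l z) (K1_intOn l z hl)]
  have heq : ∫ t in Ioi (0:ℝ), t * Real.sin (t * z) * Real.exp (-(l * |t|)) =
      ∫ t in Ioi (0:ℝ), t * Real.sin (t * z) * Real.exp (-(l * t)) := by
    refine setIntegral_congr_fun measurableSet_Ioi (fun t ht => ?_)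
    rw [abs_of_pos ht]
  rw [heq, J1 l z hl]
  ring

lemma K2_intOn (l z : ℝ) (hl : 0 < l) :
    IntegrableOn (fun t : ℝ => t ^ 2 * Real.cos (t * z) * Real.exp (-(l * |t|))) (Ioi (0:ℝ)) := by
  have := intOn_aux l hl 2 (fun t => Real.cos (t * z))
    (Real.continuous_cos.comp (continuous_id.mul continuous_const))
    (fun t => Real.abs_cos_le_one _)
  refine this.congr_fun (fun t ht => ?_) measurableSet_Ioi
  rw [abs_of_pos ht]

lemma K2_even (l z : ℝ) : ∀ t : ℝ,
    (-t) ^ 2 * Real.cos ((-t) * z) * Real.exp (-(l * |(-t)|)) =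
      t ^ 2 * Real.cos (t * z) * Real.exp (-(l * |t|)) := by
  intro t
  rw [abs_neg, show (-t) * z = -(t * z) from neg_mul _ _, Real.cos_neg, neg_pow]
  ring

lemma K2_int (l z : ℝ) (hl : 0 < l) :
    Integrable (fun t : ℝ => t ^ 2 * Real.cos (t * z) * Real.exp (-(l * |t|))) :=
  even_integrable _ (K2_even l z) (K2_intOn l z hl)

lemma K2 (l z : ℝ) (hl : 0 < l) :
    ∫ t : ℝ, t ^ 2 * Real.cos (t * z) * Real.exp (-(l * |t|)) =
      4 * l * (l ^ 2 - 3 * z ^ 2) / (l ^ 2 + z ^ 2) ^ 3 := by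
  rw [even_integral _ (K2_even l z) (K2_intOn l z hl)]
  have heq : ∫ t in Ioi (0:ℝ), t ^ 2 * Real.cos (t * z) * Real.exp (-(l * |t|)) =
      ∫ t in Ioi (0:ℝ), t ^ 2 * Real.cos (t * z) * Real.exp (-(l * t)) := by
    refine setIntegral_congr_fun measurableSet_Ioi (fun t ht => ?_)
    rw [abs_of_pos ht]
  rw [heq, J2 l z hl]
  ring

-- the per-pair integrand
noncomputable def pairFun (l a b : ℝ) : ℝ → ℝ := fun t =>
  (Real.sin (t * a) * Real.sin (t * b) + 2 * t * (Real.sin (t * a) * Real.cos (t * b)) +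
    t ^ 2 * (Real.cos (t * a) * Real.cos (t * b))) * Real.exp (-(l * |t|))

lemma pairFun_eq (l a b : ℝ) : pairFun l a b = fun t =>
    (1/2) * (Real.cos (t * (a - b)) * Real.exp (-(l * |t|)))
    - (1/2) * (Real.cos (t * (a + b)) * Real.exp (-(l * |t|)))
    + (t * Real.sin (t * (a + b)) * Real.exp (-(l * |t|))
       + t * Real.sin (t * (a - b)) * Real.exp (-(l * |t|)))
    + (1/2) * (t ^ 2 * Real.cos (t * (a + b)) * Real.exp (-(l * |t|)))
    + (1/2) * (t ^ 2 * Real.cos (t * (a - b)) * Real.exp (-(l * |t|))) := by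
  funext t
  simp only [pairFun, mul_add, mul_sub, Real.cos_add, Real.cos_sub, Real.sin_add, Real.sin_sub]
  ring

lemma pair_integrable (l : ℝ) (hl : 0 < l) (a b : ℝ) : Integrable (pairFun l a b) := by
  rw [pairFun_eq]
  exact (((((K0_int l (a-b) hl).const_mul _).sub ((K0_int l (a+b) hl).const_mul _)).add
    ((K1_int l (a+b) hl).add (K1_int l (a-b) hl))).add
    ((K2_int l (a+b) hl).const_mul _)).add ((K2_int l (a-b) hl).const_mul _)

lemma pair_integral (l : ℝ) (hl : 0 < l) (a b : ℝ) :
    ∫ t : ℝ, pairFun l a b t =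
      l / (l ^ 2 + (a - b) ^ 2) - l / (l ^ 2 + (a + b) ^ 2)
      + 4 * l * (a + b) / (l ^ 2 + (a + b) ^ 2) ^ 2
      + 4 * l * (a - b) / (l ^ 2 + (a - b) ^ 2) ^ 2
      + 2 * l * (l ^ 2 - 3 * (a + b) ^ 2) / (l ^ 2 + (a + b) ^ 2) ^ 3
      + 2 * l * (l ^ 2 - 3 * (a - b) ^ 2) / (l ^ 2 + (a - b) ^ 2) ^ 3 := by
  have i0m : Integrable (fun t : ℝ => (1/2 : ℝ) * (Real.cos (t * (a - b)) * Real.exp (-(l * |t|)))) :=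
    (K0_int l (a-b) hl).const_mul _
  have i0p : Integrable (fun t : ℝ => (1/2 : ℝ) * (Real.cos (t * (a + b)) * Real.exp (-(l * |t|)))) :=
    (K0_int l (a+b) hl).const_mul _
  have i1p := K1_int l (a+b) hl
  have i1m := K1_int l (a-b) hl
  have i2p : Integrable (fun t : ℝ => (1/2 : ℝ) * (t ^ 2 * Real.cos (t * (a + b)) * Real.exp (-(l * |t|)))) :=
    (K2_int l (a+b) hl).const_mul _
  have i2m : Integrable (fun t : ℝ => (1/2 : ℝ) * (t ^ 2 * Real.cos (t * (a - b)) * Real.exp (-(l * |t|)))) :=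
    (K2_int l (a-b) hl).const_mul _
  have s1 : (∫ t : ℝ, ((1/2 : ℝ) * (Real.cos (t * (a - b)) * Real.exp (-(l * |t|)))
        - (1/2 : ℝ) * (Real.cos (t * (a + b)) * Real.exp (-(l * |t|)))
        + (t * Real.sin (t * (a + b)) * Real.exp (-(l * |t|))
           + t * Real.sin (t * (a - b)) * Real.exp (-(l * |t|)))
        + (1/2 : ℝ) * (t ^ 2 * Real.cos (t * (a + b)) * Real.exp (-(l * |t|)))
        + (1/2 : ℝ) * (t ^ 2 * Real.cos (t * (a - b)) * Real.exp (-(l * |t|))))) =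
      (∫ t : ℝ, ((1/2 : ℝ) * (Real.cos (t * (a - b)) * Real.exp (-(l * |t|)))
        - (1/2 : ℝ) * (Real.cos (t * (a + b)) * Real.exp (-(l * |t|)))
        + (t * Real.sin (t * (a + b)) * Real.exp (-(l * |t|))
           + t * Real.sin (t * (a - b)) * Real.exp (-(l * |t|)))
        + (1/2 : ℝ) * (t ^ 2 * Real.cos (t * (a + b)) * Real.exp (-(l * |t|)))))
      + ∫ t : ℝ, (1/2 : ℝ) * (t ^ 2 * Real.cos (t * (a - b)) * Real.exp (-(l * |t|))) :=
    integral_add (((i0m.sub i0p).add (i1p.add i1m)).add i2p) i2m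
  have s2 : (∫ t : ℝ, ((1/2 : ℝ) * (Real.cos (t * (a - b)) * Real.exp (-(l * |t|)))
        - (1/2 : ℝ) * (Real.cos (t * (a + b)) * Real.exp (-(l * |t|)))
        + (t * Real.sin (t * (a + b)) * Real.exp (-(l * |t|))
           + t * Real.sin (t * (a - b)) * Real.exp (-(l * |t|)))
        + (1/2 : ℝ) * (t ^ 2 * Real.cos (t * (a + b)) * Real.exp (-(l * |t|))))) =
      (∫ t : ℝ, ((1/2 : ℝ) * (Real.cos (t * (a - b)) * Real.exp (-(l * |t|)))
        - (1/2 : ℝ) * (Real.cos (t * (a + b)) * Real.exp (-(l * |t|)))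
        + (t * Real.sin (t * (a + b)) * Real.exp (-(l * |t|))
           + t * Real.sin (t * (a - b)) * Real.exp (-(l * |t|)))))
      + ∫ t : ℝ, (1/2 : ℝ) * (t ^ 2 * Real.cos (t * (a + b)) * Real.exp (-(l * |t|))) :=
    integral_add ((i0m.sub i0p).add (i1p.add i1m)) i2p
  have s3 : (∫ t : ℝ, ((1/2 : ℝ) * (Real.cos (t * (a - b)) * Real.exp (-(l * |t|)))
        - (1/2 : ℝ) * (Real.cos (t * (a + b)) * Real.exp (-(l * |t|)))
        + (t * Real.sin (t * (a + b)) * Real.exp (-(l * |t|))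
           + t * Real.sin (t * (a - b)) * Real.exp (-(l * |t|))))) =
      (∫ t : ℝ, ((1/2 : ℝ) * (Real.cos (t * (a - b)) * Real.exp (-(l * |t|)))
        - (1/2 : ℝ) * (Real.cos (t * (a + b)) * Real.exp (-(l * |t|)))))
      + ∫ t : ℝ, (t * Real.sin (t * (a + b)) * Real.exp (-(l * |t|))
           + t * Real.sin (t * (a - b)) * Real.exp (-(l * |t|))) :=
    integral_add (i0m.sub i0p) (i1p.add i1m)
  have s4 : (∫ t : ℝ, ((1/2 : ℝ) * (Real.cos (t * (a - b)) * Real.exp (-(l * |t|)))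
        - (1/2 : ℝ) * (Real.cos (t * (a + b)) * Real.exp (-(l * |t|))))) =
      (∫ t : ℝ, (1/2 : ℝ) * (Real.cos (t * (a - b)) * Real.exp (-(l * |t|))))
      - ∫ t : ℝ, (1/2 : ℝ) * (Real.cos (t * (a + b)) * Real.exp (-(l * |t|))) :=
    integral_sub i0m i0p
  have s5 : (∫ t : ℝ, (t * Real.sin (t * (a + b)) * Real.exp (-(l * |t|))
           + t * Real.sin (t * (a - b)) * Real.exp (-(l * |t|)))) =
      (∫ t : ℝ, t * Real.sin (t * (a + b)) * Real.exp (-(l * |t|)))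
      + ∫ t : ℝ, t * Real.sin (t * (a - b)) * Real.exp (-(l * |t|)) :=
    integral_add i1p i1m
  rw [pairFun_eq, s1, s2, s3, s4, s5, integral_const_mul, integral_const_mul,
    integral_const_mul, integral_const_mul,
    K0 l (a-b) hl, K0 l (a+b) hl, K1 l (a+b) hl, K1 l (a-b) hl, K2 l (a+b) hl, K2 l (a-b) hl]
  ring

end Aux

theorem Tn_closed_form (n : ℕ) (hn : 0 < n) (e : Fin n → ℝ) (l : ℝ) (hl : 0 < l) :
    (n : ℝ) * ∫ t : ℝ,
        (((1 / n : ℝ) * ∑ j, Real.sin (t * e j)) +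
          t * ((1 / n : ℝ) * ∑ j, Real.cos (t * e j))) ^ 2 * Real.exp (-(l * |t|)) =
      (l / n) * ∑ j, ∑ k,
        (1 / (l ^ 2 + (e k - e j) ^ 2) - 1 / (l ^ 2 + (e k + e j) ^ 2) +
          4 * (e k + e j) / (l ^ 2 + (e k + e j) ^ 2) ^ 2 +
          2 * (l ^ 2 - 3 * (e k + e j) ^ 2) / (l ^ 2 + (e k + e j) ^ 2) ^ 3 +
          2 * (l ^ 2 - 3 * (e k - e j) ^ 2) / (l ^ 2 + (e k - e j) ^ 2) ^ 3) := by
  have hN : ((n : ℝ)) ≠ 0 := Nat.cast_ne_zero.2 hn.ne'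
  -- pointwise expansion
  have hpt : ∀ t : ℝ,
      (((1 / n : ℝ) * ∑ j, Real.sin (t * e j)) +
          t * ((1 / n : ℝ) * ∑ j, Real.cos (t * e j))) ^ 2 * Real.exp (-(l * |t|)) =
      (1 / (n:ℝ) ^ 2) * ∑ j, ∑ k, pairFun l (e j) (e k) t := by
    intro t
    have hss := Fintype.sum_mul_sum (fun j : Fin n => Real.sin (t * e j))
      (fun k : Fin n => Real.sin (t * e k))
    have hsc := Fintype.sum_mul_sum (fun j : Fin n => Real.sin (t * e j))
      (fun k : Fin n => Real.cos (t * e k))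
    have hcc := Fintype.sum_mul_sum (fun j : Fin n => Real.cos (t * e j))
      (fun k : Fin n => Real.cos (t * e k))
    have hexpand : ∑ j, ∑ k, pairFun l (e j) (e k) t =
        ((∑ j, Real.sin (t * e j)) * (∑ k, Real.sin (t * e k))
          + 2 * t * ((∑ j, Real.sin (t * e j)) * (∑ k, Real.cos (t * e k)))
          + t ^ 2 * ((∑ j, Real.cos (t * e j)) * (∑ k, Real.cos (t * e k))))
          * Real.exp (-(l * |t|)) := by
      rw [hss, hsc, hcc]
      simp only [pairFun, Finset.mul_sum, Finset.sum_mul, ← Finset.sum_add_distrib]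
    rw [hexpand]
    ring
  rw [integral_congr_ae (Filter.Eventually.of_forall hpt), integral_const_mul,
    integral_finset_sum _ (fun j _ => integrable_finset_sum _
      (fun k _ => pair_integrable l hl (e j) (e k)))]
  have hin : ∀ j : Fin n, (∫ t : ℝ, ∑ k, pairFun l (e j) (e k) t) =
      ∑ k, ∫ t : ℝ, pairFun l (e j) (e k) t :=
    fun j => integral_finset_sum _ (fun k _ => pair_integrable l hl (e j) (e k))
  have hval : ∀ j k : Fin n, (∫ t : ℝ, pairFun l (e j) (e k) t) =
      l * (1 / (l ^ 2 + (e k - e j) ^ 2) - 1 / (l ^ 2 + (e k + e j) ^ 2) +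
          4 * (e k + e j) / (l ^ 2 + (e k + e j) ^ 2) ^ 2 +
          2 * (l ^ 2 - 3 * (e k + e j) ^ 2) / (l ^ 2 + (e k + e j) ^ 2) ^ 3 +
          2 * (l ^ 2 - 3 * (e k - e j) ^ 2) / (l ^ 2 + (e k - e j) ^ 2) ^ 3)
        + 4 * l * (e j - e k) / (l ^ 2 + (e j - e k) ^ 2) ^ 2 := by
    intro j k
    rw [pair_integral l hl (e j) (e k)]
    ring
  have hLL : ∑ j : Fin n, (∫ t : ℝ, ∑ k, pairFun l (e j) (e k) t) =
      ∑ j : Fin n, ∑ k : Fin n,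
        (l * (1 / (l ^ 2 + (e k - e j) ^ 2) - 1 / (l ^ 2 + (e k + e j) ^ 2) +
          4 * (e k + e j) / (l ^ 2 + (e k + e j) ^ 2) ^ 2 +
          2 * (l ^ 2 - 3 * (e k + e j) ^ 2) / (l ^ 2 + (e k + e j) ^ 2) ^ 3 +
          2 * (l ^ 2 - 3 * (e k - e j) ^ 2) / (l ^ 2 + (e k - e j) ^ 2) ^ 3)
        + 4 * l * (e j - e k) / (l ^ 2 + (e j - e k) ^ 2) ^ 2) := by
    refine Finset.sum_congr rfl (fun j _ => ?_)
    rw [hin j]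
    exact Finset.sum_congr rfl (fun k _ => hval j k)
  rw [hLL]
  have hsplit : ∑ j : Fin n, ∑ k : Fin n,
      (l * (1 / (l ^ 2 + (e k - e j) ^ 2) - 1 / (l ^ 2 + (e k + e j) ^ 2) +
          4 * (e k + e j) / (l ^ 2 + (e k + e j) ^ 2) ^ 2 +
          2 * (l ^ 2 - 3 * (e k + e j) ^ 2) / (l ^ 2 + (e k + e j) ^ 2) ^ 3 +
          2 * (l ^ 2 - 3 * (e k - e j) ^ 2) / (l ^ 2 + (e k - e j) ^ 2) ^ 3)
        + 4 * l * (e j - e k) / (l ^ 2 + (e j - e k) ^ 2) ^ 2) =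
      (∑ j : Fin n, ∑ k : Fin n,
        l * (1 / (l ^ 2 + (e k - e j) ^ 2) - 1 / (l ^ 2 + (e k + e j) ^ 2) +
          4 * (e k + e j) / (l ^ 2 + (e k + e j) ^ 2) ^ 2 +
          2 * (l ^ 2 - 3 * (e k + e j) ^ 2) / (l ^ 2 + (e k + e j) ^ 2) ^ 3 +
          2 * (l ^ 2 - 3 * (e k - e j) ^ 2) / (l ^ 2 + (e k - e j) ^ 2) ^ 3))
      + ∑ j : Fin n, ∑ k : Fin n, 4 * l * (e j - e k) / (l ^ 2 + (e j - e k) ^ 2) ^ 2 := by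
    rw [← Finset.sum_add_distrib]
    exact Finset.sum_congr rfl (fun j _ => Finset.sum_add_distrib)
  have hanti : ∑ j : Fin n, ∑ k : Fin n,
      4 * l * (e j - e k) / (l ^ 2 + (e j - e k) ^ 2) ^ 2 = 0 := by
    have hcomm : ∑ j : Fin n, ∑ k : Fin n,
        4 * l * (e j - e k) / (l ^ 2 + (e j - e k) ^ 2) ^ 2 =
        ∑ k : Fin n, ∑ j : Fin n,
        4 * l * (e j - e k) / (l ^ 2 + (e j - e k) ^ 2) ^ 2 := Finset.sum_comm
    have hneg : ∑ k : Fin n, ∑ j : Fin n,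
        4 * l * (e j - e k) / (l ^ 2 + (e j - e k) ^ 2) ^ 2 =
        - ∑ j : Fin n, ∑ k : Fin n,
        4 * l * (e j - e k) / (l ^ 2 + (e j - e k) ^ 2) ^ 2 := by
      rw [← Finset.sum_neg_distrib]
      refine Finset.sum_congr rfl (fun j _ => ?_)
      rw [← Finset.sum_neg_distrib]
      refine Finset.sum_congr rfl (fun k _ => ?_)
      ring
    linarith [hcomm, hneg]
  rw [hsplit, hanti, add_zero]
  simp only [← Finset.mul_sum]
  field_simp
  ring
end

section
/- For fixed real numbers e₁, …, eₙ, with Dₙ(t) = Sₙ(t) + t·Cₙ(t) and T_{n,λ} = n·∫_ℝ Dₙ(t)²·e^{−λ|t|}dt, one has lim_{λ→∞} (λ³/4)·T_{n,λ} = n·((1/n)·Σⱼ eⱼ + 1)². -/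
open MeasureTheory Filter Set

private lemma integrable_abs_comp {f : ℝ → ℝ} (hf : IntegrableOn f (Ioi 0)) :
    Integrable (fun x : ℝ => f |x|) := by
  have hIoi : IntegrableOn (fun x : ℝ => f |x|) (Ioi 0) :=
    hf.congr_fun (fun x hx => by rw [abs_of_pos hx]) measurableSet_Ioi
  have hIic : IntegrableOn (fun x : ℝ => f |x|) (Iic 0) := by
    rw [← Measure.map_neg_eq_self (volume : Measure ℝ)]
    have m : MeasurableEmbedding fun x : ℝ => -x := (Homeomorph.neg ℝ).measurableEmbedding
    rw [m.integrableOn_map_iff]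
    simp_rw [Function.comp_def, abs_neg, neg_preimage, neg_Iic, neg_zero]
    exact (integrableOn_Ici_iff_integrableOn_Ioi).mpr hIoi
  rw [← integrableOn_univ, ← Iic_union_Ioi (a := (0:ℝ))]
  exact hIic.union hIoi

private lemma integrableOn_sq_exp : IntegrableOn (fun y : ℝ => y ^ 2 * Real.exp (-y)) (Ioi 0) := by
  have h := Real.GammaIntegral_convergent (s := 3) (by norm_num)
  refine h.congr_fun (fun x _ => ?_) measurableSet_Ioi
  beta_reduce
  rw [show (3:ℝ) - 1 = ((2:ℕ):ℝ) by norm_num, Real.rpow_natCast]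
  ring

private lemma integrable_sq_exp_abs : Integrable (fun x : ℝ => x ^ 2 * Real.exp (-|x|)) := by
  have := integrable_abs_comp integrableOn_sq_exp
  refine this.congr (ae_of_all _ fun x => ?_)
  simp [sq_abs]

private lemma integral_sq_exp_abs : ∫ x : ℝ, x ^ 2 * Real.exp (-|x|) = 4 := by
  have h1 : (∫ x : ℝ, x ^ 2 * Real.exp (-|x|))
      = ∫ x : ℝ, (fun y : ℝ => y ^ 2 * Real.exp (-y)) |x| := by
    congr 1; funext x; simp [sq_abs]
  rw [h1, integral_comp_abs (f := fun y : ℝ => y ^ 2 * Real.exp (-y))]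
  have h2 : (∫ y : ℝ in Ioi 0, y ^ 2 * Real.exp (-y))
      = ∫ t : ℝ in Ioi 0, t ^ ((3:ℝ) - 1) * Real.exp (-(1 * t)) := by
    refine setIntegral_congr_fun measurableSet_Ioi (fun x _ => ?_)
    rw [show (3:ℝ) - 1 = ((2:ℕ):ℝ) by norm_num, Real.rpow_natCast]
    ring_nf
  rw [h2, Real.integral_rpow_mul_exp_neg_mul_Ioi (by norm_num) (by norm_num)]
  have h3 : Real.Gamma 3 = 2 := by
    rw [show (3:ℝ) = (2:ℕ) + 1 by norm_num, Real.Gamma_nat_eq_factorial]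
    norm_num
  rw [h3]
  norm_num

theorem Tn_limit_statistic (n : ℕ) (hn : 0 < n) (e : Fin n → ℝ) :
    Tendsto (fun l : ℝ =>
        (l ^ 3 / 4) * ((n : ℝ) * ∫ t : ℝ,
          (((1 / n : ℝ) * ∑ j, Real.sin (t * e j)) +
            t * ((1 / n : ℝ) * ∑ j, Real.cos (t * e j))) ^ 2 *
              Real.exp (-(l * |t|))))
      atTop
      (nhds ((n : ℝ) * ((1 / n : ℝ) * (∑ j, e j) + 1) ^ 2)) := by
  have hn' : (0:ℝ) < n := Nat.cast_pos.mpr hn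
  set D : ℝ → ℝ := fun t => ((1 / n : ℝ) * ∑ j, Real.sin (t * e j)) +
    t * ((1 / n : ℝ) * ∑ j, Real.cos (t * e j)) with hDdef
  set a : ℝ := (1 / n : ℝ) * (∑ j, e j) + 1 with hadef
  set M : ℝ := (1 / n : ℝ) * (∑ j, |e j|) + 1 with hMdef
  have hM0 : 0 ≤ M := by
    have : 0 ≤ (1 / n : ℝ) * (∑ j, |e j|) := by positivity
    simp only [hMdef]; linarith
  have hD0 : D 0 = 0 := by simp [hDdef]
  have hDcont : Continuous D := by
    apply Continuous.add
    · exact continuous_const.mul (continuous_finset_sum _ fun j _ =>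
        Real.continuous_sin.comp (continuous_id.mul continuous_const))
    · exact continuous_id.mul (continuous_const.mul (continuous_finset_sum _ fun j _ =>
        Real.continuous_cos.comp (continuous_id.mul continuous_const)))
  -- bound |D t| ≤ M * |t|
  have hDb : ∀ t : ℝ, |D t| ≤ M * |t| := by
    intro t
    have h1 : |(1 / n : ℝ) * ∑ j, Real.sin (t * e j)| ≤ (1/n : ℝ) * (∑ j, |e j|) * |t| := by
      rw [abs_mul, abs_of_nonneg (by positivity : (0:ℝ) ≤ 1/(n:ℝ)), mul_assoc]
      gcongr
      calc |∑ j, Real.sin (t * e j)| ≤ ∑ j, |Real.sin (t * e j)| :=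
            Finset.abs_sum_le_sum_abs _ _
        _ ≤ ∑ j, |e j| * |t| := by
            refine Finset.sum_le_sum fun j _ => ?_
            calc |Real.sin (t * e j)| ≤ |t * e j| := Real.abs_sin_le_abs
              _ = |e j| * |t| := by rw [abs_mul]; ring
        _ = (∑ j, |e j|) * |t| := by rw [← Finset.sum_mul]
    have h2 : |t * ((1 / n : ℝ) * ∑ j, Real.cos (t * e j))| ≤ |t| := by
      rw [abs_mul]
      have : |(1 / n : ℝ) * ∑ j, Real.cos (t * e j)| ≤ 1 := by
        rw [abs_mul, abs_of_nonneg (by positivity : (0:ℝ) ≤ 1/(n:ℝ))]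
        have : |∑ j, Real.cos (t * e j)| ≤ (n : ℝ) := by
          calc |∑ j, Real.cos (t * e j)| ≤ ∑ j, |Real.cos (t * e j)| :=
                Finset.abs_sum_le_sum_abs _ _
            _ ≤ ∑ _j : Fin n, (1:ℝ) := Finset.sum_le_sum fun j _ => Real.abs_cos_le_one _
            _ = n := by simp
        calc (1/n : ℝ) * |∑ j, Real.cos (t * e j)| ≤ (1/n : ℝ) * n := by gcongr
          _ = 1 := by field_simp
      calc |t| * |(1 / n : ℝ) * ∑ j, Real.cos (t * e j)| ≤ |t| * 1 := by gcongr
        _ = |t| := mul_one _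
    calc |D t| ≤ |(1 / n : ℝ) * ∑ j, Real.sin (t * e j)| +
          |t * ((1 / n : ℝ) * ∑ j, Real.cos (t * e j))| := abs_add_le _ _
      _ ≤ (1/n : ℝ) * (∑ j, |e j|) * |t| + |t| := add_le_add h1 h2
      _ = M * |t| := by rw [hMdef]; ring
  -- derivative of D at 0
  have hderiv : HasDerivAt D a 0 := by
    have hsin : HasDerivAt (fun t : ℝ => (1/n:ℝ) * ∑ j, Real.sin (t * e j))
        ((1/n:ℝ) * ∑ j, e j) 0 := by
      refine HasDerivAt.const_mul _ ?_
      have h := HasDerivAt.fun_sum (u := Finset.univ)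
        (A := fun j (t : ℝ) => Real.sin (t * e j)) (A' := fun j => e j) (x := (0:ℝ))
        (fun j _ => ?_)
      · exact h
      · have h1 : HasDerivAt (fun t : ℝ => t * e j) (e j) 0 := hasDerivAt_mul_const (e j)
        have := h1.sin
        simpa using this
    have hcos : HasDerivAt (fun t : ℝ => (1/n:ℝ) * ∑ j, Real.cos (t * e j)) 0 0 := by
      have h0 : HasDerivAt (fun t : ℝ => (1/n:ℝ) * ∑ j, Real.cos (t * e j))
          ((1/n:ℝ) * ∑ j : Fin n, (0:ℝ)) 0 := by
        refine HasDerivAt.const_mul _ ?_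
        refine HasDerivAt.fun_sum (fun j _ => ?_)
        have h1 : HasDerivAt (fun t : ℝ => t * e j) (e j) 0 := hasDerivAt_mul_const (e j)
        have := h1.cos
        simpa using this
      simpa using h0
    have hprod : HasDerivAt (fun t : ℝ => t * ((1/n:ℝ) * ∑ j, Real.cos (t * e j))) 1 0 := by
      have h := (hasDerivAt_id (0:ℝ)).fun_mul hcos
      have hne : (n:ℝ) ≠ 0 := ne_of_gt hn'
      have h3 : HasDerivAt (fun t : ℝ => t * ((1/n:ℝ) * ∑ j, Real.cos (t * e j)))
          ((n:ℝ)⁻¹ * n) 0 := by simpa using h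
      rwa [inv_mul_cancel₀ hne] at h3
    have := hsin.fun_add hprod
    simpa [hDdef, hadef] using this
  -- slope limit
  have hslope : Tendsto (fun h : ℝ => D h / h) (nhdsWithin 0 {(0:ℝ)}ᶜ) (nhds a) := by
    rw [hasDerivAt_iff_tendsto_slope] at hderiv
    refine hderiv.congr fun x => ?_
    simp [slope_def_field, hD0]
  -- pointwise limit
  have hpt : ∀ x : ℝ, x ≠ 0 →
      Tendsto (fun l : ℝ => (l * D (x / l))^2 * Real.exp (-|x|)) atTop
        (nhds ((a * x)^2 * Real.exp (-|x|))) := by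
    intro x hx
    have h1 : Tendsto (fun l : ℝ => x / l) atTop (nhdsWithin 0 {(0:ℝ)}ᶜ) := by
      apply tendsto_nhdsWithin_of_tendsto_nhds_of_eventually_within
      · exact tendsto_const_nhds.div_atTop tendsto_id
      · filter_upwards [eventually_gt_atTop (0:ℝ)] with l hl
        exact div_ne_zero hx (ne_of_gt hl)
    have h2 : Tendsto (fun l : ℝ => D (x / l) / (x / l)) atTop (nhds a) := hslope.comp h1
    have h3 : Tendsto (fun l : ℝ => D (x / l) / (x / l) * x) atTop (nhds (a * x)) :=
      h2.mul_const x
    have h4 : Tendsto (fun l : ℝ => l * D (x / l)) atTop (nhds (a * x)) := by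
      refine h3.congr' ?_
      filter_upwards [eventually_gt_atTop (0:ℝ)] with l hl
      field_simp
    exact (h4.pow 2).mul_const _
  -- dominated convergence
  have key : Tendsto (fun l : ℝ => ∫ x : ℝ, (l * D (x / l))^2 * Real.exp (-|x|)) atTop
      (nhds (∫ x : ℝ, (a * x)^2 * Real.exp (-|x|))) := by
    apply tendsto_integral_filter_of_dominated_convergence
      (fun x : ℝ => M^2 * (x^2 * Real.exp (-|x|)))
    · filter_upwards with l
      apply Continuous.aestronglyMeasurable
      exact ((continuous_const.mul (hDcont.comp (continuous_id.div_const l))).pow 2).mul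
        (continuous_abs.neg.rexp)
    · filter_upwards [eventually_gt_atTop (0:ℝ)] with l hl
      refine ae_of_all _ fun x => ?_
      rw [Real.norm_eq_abs, abs_of_nonneg (by positivity)]
      have hb : |l * D (x / l)| ≤ M * |x| := by
        rw [abs_mul, abs_of_pos hl]
        calc l * |D (x / l)| ≤ l * (M * |x / l|) := by gcongr; exact hDb _
          _ = M * |x| := by rw [abs_div, abs_of_pos hl]; field_simp
      calc (l * D (x / l))^2 * Real.exp (-|x|)
          = |l * D (x / l)|^2 * Real.exp (-|x|) := by rw [sq_abs]
        _ ≤ (M * |x|)^2 * Real.exp (-|x|) := by gcongr <;> exact abs_nonneg _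
        _ = M^2 * (x^2 * Real.exp (-|x|)) := by rw [mul_pow, sq_abs]; ring
    · exact integrable_sq_exp_abs.const_mul _
    · have h0 : ∀ᵐ x : ℝ, x ≠ 0 := by
        refine ae_iff.mpr ?_
        simpa using measure_singleton (0:ℝ)
      filter_upwards [h0] with x hx
      exact hpt x hx
  -- value of limit integral
  have hInt : (∫ x : ℝ, (a * x)^2 * Real.exp (-|x|)) = 4 * a^2 := by
    have : (∫ x : ℝ, (a * x)^2 * Real.exp (-|x|))
        = ∫ x : ℝ, a^2 * (x^2 * Real.exp (-|x|)) := by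
      congr 1; funext x; ring
    rw [this, integral_const_mul, integral_sq_exp_abs]
    ring
  rw [hInt] at key
  have final : Tendsto (fun l : ℝ =>
      ((n:ℝ)/4) * ∫ x : ℝ, (l * D (x / l))^2 * Real.exp (-|x|)) atTop
      (nhds ((n:ℝ) * a^2)) := by
    have := key.const_mul ((n:ℝ)/4)
    have heq : ((n:ℝ)/4) * (4 * a^2) = (n:ℝ) * a^2 := by ring
    rwa [heq] at this
  refine Tendsto.congr' ?_ final
  filter_upwards [eventually_gt_atTop (0:ℝ)] with l hl
  have e1 : ∀ x : ℝ, (l * D (x/l))^2 * Real.exp (-|x|)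
      = l^2 * ((fun t => D t ^ 2 * Real.exp (-(l*|t|))) (x/l)) := by
    intro x
    have habs : l * |x / l| = |x| := by
      rw [abs_div, abs_of_pos hl]; field_simp
    simp only
    rw [habs]
    ring
  have e2 : (∫ x : ℝ, (l * D (x/l))^2 * Real.exp (-|x|))
      = l^2 * ∫ x : ℝ, (fun t => D t ^ 2 * Real.exp (-(l*|t|))) (x/l) := by
    rw [← integral_const_mul]
    congr 1; funext x; exact e1 x
  rw [e2, MeasureTheory.Measure.integral_comp_div (fun t => D t ^ 2 * Real.exp (-(l*|t|))) l,
    smul_eq_mul, abs_of_pos hl]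
  ring
end
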